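/- Let Λ > 0, μ > 0 and d ≥ 0 be real numbers and let N : ℝ → ℝ be differentiable on [0, ∞) and satisfy Λ − (μ + d)·N(t) ≤ N'(t) ≤ Λ − μ·N(t) for all t ≥ 0. Then for every t ≥ 0 one has min(N(0), Λ/(μ + d)) ≤ N(t) ≤ max(N(0), Λ/μ). -/

import Mathlib

lemma sica_aux (c L : ℝ) (hc : 0 < c) (N N' : ℝ → ℝ)
    (hderiv : ∀ t, 0 ≤ t → HasDerivAt N (N' t) t)
    (hupp : ∀ t, 0 ≤ t → N' t ≤ L - c * N t) :
    ∀ t, 0 ≤ t → N t ≤ max (N 0) (L / c) := by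
  intro t ht
  set g : ℝ → ℝ := fun s => (N s - L / c) * Real.exp (c * s) with hg
  have hgd : ∀ s, 0 ≤ s → HasDerivAt g ((N' s + c * N s - L) * Real.exp (c * s)) s := by
    intro s hs
    have h1 : HasDerivAt (fun s => N s - L / c) (N' s) s := (hderiv s hs).sub_const _
    have h2 : HasDerivAt (fun s => Real.exp (c * s)) (Real.exp (c * s) * c) s :=
      by simpa using ((hasDerivAt_id s).const_mul c).exp
    have : HasDerivAt (fun s => (N s - L / c) * Real.exp (c * s)) _ s := h1.mul h2
    convert this using 1
    have hLc : L / c * c = L := div_mul_cancel₀ L hc.ne'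
    linear_combination (Real.exp (c * s)) * hLc
  have hanti : AntitoneOn g (Set.Ici 0) := by
    apply antitoneOn_of_deriv_nonpos (convex_Ici 0)
    · intro x hx
      exact (hgd x hx).continuousAt.continuousWithinAt
    · intro x hx
      rw [interior_Ici] at hx
      exact (hgd x hx.le).differentiableAt.differentiableWithinAt
    · intro x hx
      rw [interior_Ici] at hx
      rw [(hgd x hx.le).deriv]
      apply mul_nonpos_of_nonpos_of_nonneg
      · have := hupp x hx.le
        linarith
      · exact (Real.exp_pos _).le
  have hgle : g t ≤ g 0 := hanti Set.self_mem_Ici ht ht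
  have hg0 : g 0 = N 0 - L / c := by simp [hg]
  rcases le_or_gt (N t) (L / c) with h | h
  · exact le_max_of_le_right h
  · have hexp : 1 ≤ Real.exp (c * t) :=
      Real.one_le_exp (mul_nonneg hc.le ht)
    have hpos : 0 < N t - L / c := by linarith
    have : N t - L / c ≤ (N t - L / c) * Real.exp (c * t) :=
      le_mul_of_one_le_right hpos.le hexp
    have : N t - L / c ≤ N 0 - L / c := by
      rw [hg0] at hgle
      calc N t - L / c ≤ g t := this
        _ ≤ _ := hgle
    exact le_max_of_le_left (by linarith)

/-- Uniform two-sided pathwise bound underlying Lemma 3.2: if `N` is differentiable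
on `[0, ∞)` with derivative `N'` satisfying
`Λ - (μ + d) * N t ≤ N' t ≤ Λ - μ * N t` for all `t ≥ 0`, where `Λ > 0`, `μ > 0`
and `d ≥ 0`, then for every `t ≥ 0`,
`min (N 0) (Λ/(μ+d)) ≤ N t ≤ max (N 0) (Λ/μ)`. -/
theorem sica_uniform_bounds
    (Λ μ d : ℝ) (hΛ : 0 < Λ) (hμ : 0 < μ) (hd : 0 ≤ d)
    (N N' : ℝ → ℝ)
    (hderiv : ∀ t, 0 ≤ t → HasDerivAt N (N' t) t)
    (hlow : ∀ t, 0 ≤ t → Λ - (μ + d) * N t ≤ N' t)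
    (hupp : ∀ t, 0 ≤ t → N' t ≤ Λ - μ * N t) :
    ∀ t, 0 ≤ t →
      min (N 0) (Λ / (μ + d)) ≤ N t ∧ N t ≤ max (N 0) (Λ / μ) := by
  intro t ht
  constructor
  · have hc : 0 < μ + d := by linarith
    have := sica_aux (μ + d) (-Λ) hc (fun s => -N s) (fun s => -N' s)
      (fun s hs => (hderiv s hs).neg)
      (fun s hs => by have := hlow s hs; show -N' s ≤ -Λ - (μ + d) * -N s; linarith) t ht
    have hmax : max (-N 0) (-Λ / (μ + d)) = -min (N 0) (Λ / (μ + d)) := by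
      rw [neg_div, max_neg_neg]
    rw [hmax] at this
    linarith [this]
  · exact sica_aux μ Λ hμ N N' hderiv hupp t ht
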